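/- In the partial suppression setup, for any two distinct items x, y ∈ I, the support of the pair decreases by at least 1 and at most 2: s({x, y}, R) − 2 ≤ s({x, y}, R') ≤ s({x, y}, R) − 1. -/

import Mathlib

variable {α : Type*} [DecidableEq α]

/-- Support of an itemset `I` in a record chunk `R`: the number of records
of `R`, counted with multiplicity, that are supersets of `I`. -/
def supp (I : Finset α) (R : Multiset (Finset α)) : ℕ :=
  (R.filter fun r => I ⊆ r).card

theorem partial_suppression_pair_bounds
    (I : Finset α) (hI : 2 ≤ I.card)
    (c : ℕ) (hc : c = (I.card + 1) / 2)
    (P : Fin c → Finset α)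
    (hPdisj : ∀ i j : Fin c, i ≠ j → Disjoint (P i) (P j))
    (hPne : ∀ i : Fin c, (P i).Nonempty)
    (hPcard : ∀ i : Fin c, (P i).card ≤ 2)
    (hPunion : Finset.univ.biUnion P = I)
    (L₁ L₂ : Finset α)
    (hLunion : L₁ ∪ L₂ = I) (hLdisj : L₁ ∩ L₂ = ∅)
    (hsplit : ∀ i : Fin c, (P i).card = 2 →
      (P i ∩ L₁).card = 1 ∧ (P i ∩ L₂).card = 1)
    (R : Multiset (Finset α))
    (hR : c • ({I} : Multiset (Finset α)) ≤ R)
    (R' : Multiset (Finset α))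
    (hR' : R' = (R - c • ({I} : Multiset (Finset α)))
      + (Finset.univ.val.map fun i : Fin c => I \ P i)
      + {L₁, L₂})
    (x y : α) (hxI : x ∈ I) (hyI : y ∈ I) (hxy : x ≠ y) :
    supp {x, y} R - 2 ≤ supp {x, y} R' ∧
      supp {x, y} R' ≤ supp {x, y} R - 1 := by
  have hc1 : 1 ≤ c := by omega
  -- parts containing x and y
  obtain ⟨ix, -, hix⟩ := Finset.mem_biUnion.mp (hPunion ▸ hxI)
  obtain ⟨iy, -, hiy⟩ := Finset.mem_biUnion.mp (hPunion ▸ hyI)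
  have hux : ∀ i, x ∈ P i → i = ix := by
    intro i hi
    by_contra h
    exact Finset.disjoint_left.mp (hPdisj i ix h) hi hix
  have huy : ∀ i, y ∈ P i → i = iy := by
    intro i hi
    by_contra h
    exact Finset.disjoint_left.mp (hPdisj i iy h) hi hiy
  have hxyI : ({x, y} : Finset α) ⊆ I := by
    intro a ha
    simp only [Finset.mem_insert, Finset.mem_singleton] at ha
    rcases ha with rfl | rfl <;> assumption
  set S := R - c • ({I} : Multiset (Finset α)) with hS
  have hRS : S + c • ({I} : Multiset (Finset α)) = R := tsub_add_cancel_of_le hR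
  -- support of R
  have hsuppR : supp {x, y} R = supp {x, y} S + c := by
    rw [← hRS]
    simp only [supp, Multiset.filter_add, Multiset.card_add, Multiset.filter_nsmul,
      Multiset.filter_singleton, if_pos hxyI]
    simp
  -- support of the mapped records
  have hmap : supp {x, y} (Finset.univ.val.map fun i : Fin c => I \ P i)
      = (Finset.univ.filter fun i : Fin c => i ≠ ix ∧ i ≠ iy).card := by
    rw [supp, Multiset.filter_map, Multiset.card_map]
    congr 1
    apply Multiset.filter_congr
    intro i _
    constructor
    · intro h
      have hx' : x ∈ I \ P i := h (by simp)
      have hy' : y ∈ I \ P i := h (by simp)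
      simp only [Finset.mem_sdiff] at hx' hy'
      exact ⟨fun e => hx'.2 (e ▸ hix), fun e => hy'.2 (e ▸ hiy)⟩
    · rintro ⟨h1, h2⟩ a ha
      simp only [Finset.mem_insert, Finset.mem_singleton] at ha
      rcases ha with rfl | rfl
      · exact Finset.mem_sdiff.mpr ⟨hxI, fun hm => h1 (hux i hm)⟩
      · exact Finset.mem_sdiff.mpr ⟨hyI, fun hm => h2 (huy i hm)⟩
  -- ghost records: at most one of L₁, L₂ contains both x, y
  have hghost_le : supp {x, y} ({L₁, L₂} : Multiset (Finset α)) ≤ 1 := by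
    have hnot : ¬ (({x, y} : Finset α) ⊆ L₁ ∧ ({x, y} : Finset α) ⊆ L₂) := by
      rintro ⟨h1, h2⟩
      have : x ∈ L₁ ∩ L₂ := Finset.mem_inter.mpr ⟨h1 (by simp), h2 (by simp)⟩
      simp [hLdisj] at this
    show ((L₁ ::ₘ {L₂}).filter fun r => ({x, y} : Finset α) ⊆ r).card ≤ 1
    rw [Multiset.filter_cons, Multiset.filter_singleton]
    split_ifs with h1 h2 h2 <;> simp_all
  have hsuppR' : supp {x, y} R' = supp {x, y} S
      + (Finset.univ.filter fun i : Fin c => i ≠ ix ∧ i ≠ iy).card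
      + supp {x, y} ({L₁, L₂} : Multiset (Finset α)) := by
    rw [hR', ← hmap]
    simp only [supp, Multiset.filter_add, Multiset.card_add]
  by_cases hixy : ix = iy
  · -- x and y are in the same part, which must be {x, y}
    subst hixy
    have hPix : P ix = {x, y} := by
      have hsub : ({x, y} : Finset α) ⊆ P ix := by
        intro a ha
        simp only [Finset.mem_insert, Finset.mem_singleton] at ha
        rcases ha with rfl | rfl <;> assumption
      refine (Finset.eq_of_subset_of_card_le hsub ?_).symm
      rw [Finset.card_pair hxy]
      exact hPcard ix
    have hcardPix : (P ix).card = 2 := by rw [hPix, Finset.card_pair hxy]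
    obtain ⟨hs1, hs2⟩ := hsplit ix hcardPix
    -- neither ghost contains both x and y
    have hg0 : supp {x, y} ({L₁, L₂} : Multiset (Finset α)) = 0 := by
      have hn1 : ¬ (({x, y} : Finset α) ⊆ L₁) := by
        intro h
        rw [hPix, Finset.inter_eq_left.mpr h, Finset.card_pair hxy] at hs1
        omega
      have hn2 : ¬ (({x, y} : Finset α) ⊆ L₂) := by
        intro h
        rw [hPix, Finset.inter_eq_left.mpr h, Finset.card_pair hxy] at hs2
        omega
      show ((L₁ ::ₘ {L₂}).filter fun r => ({x, y} : Finset α) ⊆ r).card = 0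
      rw [Multiset.filter_cons, Multiset.filter_singleton, if_neg hn1, if_neg hn2]
      simp
    have hm : (Finset.univ.filter fun i : Fin c => i ≠ ix ∧ i ≠ ix).card = c - 1 := by
      have : (Finset.univ.filter fun i : Fin c => i ≠ ix ∧ i ≠ ix)
          = Finset.univ.erase ix := by
        ext i; simp [Finset.mem_erase, and_self]
      rw [this, Finset.card_erase_of_mem (Finset.mem_univ ix)]
      simp
    rw [hsuppR, hsuppR', hm, hg0]
    omega
  · -- x and y are in different parts
    have hc2 : 2 ≤ c := by
      have h := Fintype.one_lt_card_iff.mpr ⟨ix, iy, hixy⟩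
      simp at h
      omega
    have hm : (Finset.univ.filter fun i : Fin c => i ≠ ix ∧ i ≠ iy).card = c - 2 := by
      have : (Finset.univ.filter fun i : Fin c => i ≠ ix ∧ i ≠ iy)
          = (Finset.univ.erase ix).erase iy := by
        ext i; simp [Finset.mem_erase]; tauto
      rw [this, Finset.card_erase_of_mem
        (Finset.mem_erase.mpr ⟨fun h => hixy h.symm, Finset.mem_univ iy⟩),
        Finset.card_erase_of_mem (Finset.mem_univ ix)]
      simp
      omega
    rw [hsuppR, hsuppR', hm]
    omega
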